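/- Let A₃, H₁, H₀, L₀ be N×N complex matrices, set L₁ = −i·H₁, and suppose that for every λ ∈ ℂ with |λ| = 1 the matrices A₁(λ) = λ⁻¹H₁ + H₀ + λ·H̄₁ and A₂(λ) = λ⁻¹L₁ + L₀ + λ·L̄₁ satisfy [A₃, A₂(λ)] = −A₁(λ), [A₃, A₁(λ)] = A₂(λ), and [A₁(λ), A₂(λ)] = A₃. Then [A₃, −L₀ + i·H₀] = −i·(−L₀ + i·H₀), and consequently [A₃, [A₃, −L₀ + i·H₀]] = −(−L₀ + i·H₀). -/

import Mathlib

open Matrix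

/-- Entrywise complex conjugate of a complex matrix. -/
noncomputable def matConj {N : ℕ} (M : Matrix (Fin N) (Fin N) ℂ) : Matrix (Fin N) (Fin N) ℂ :=
  M.map (starRingEnd ℂ)

/-- `[A₃, -L₀ + i H₀] = -i (-L₀ + i H₀)` and consequently
`[A₃, [A₃, -L₀ + i H₀]] = -(-L₀ + i H₀)`. -/
theorem bracket_A3_beta0
    (N : ℕ) (hN : 1 ≤ N) (A₃ H₁ H₀ L₀ L₁ : Matrix (Fin N) (Fin N) ℂ)
    (hL₁ : L₁ = (-Complex.I) • H₁)
    (hcomm : ∀ l : ℂ, ‖l‖ = 1 →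
      (A₃ * (l⁻¹ • L₁ + L₀ + l • matConj L₁) - (l⁻¹ • L₁ + L₀ + l • matConj L₁) * A₃
          = -(l⁻¹ • H₁ + H₀ + l • matConj H₁)) ∧
      (A₃ * (l⁻¹ • H₁ + H₀ + l • matConj H₁) - (l⁻¹ • H₁ + H₀ + l • matConj H₁) * A₃
          = l⁻¹ • L₁ + L₀ + l • matConj L₁) ∧
      ((l⁻¹ • H₁ + H₀ + l • matConj H₁) * (l⁻¹ • L₁ + L₀ + l • matConj L₁)
          - (l⁻¹ • L₁ + L₀ + l • matConj L₁) * (l⁻¹ • H₁ + H₀ + l • matConj H₁) = A₃)) :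
    A₃ * (-L₀ + Complex.I • H₀) - (-L₀ + Complex.I • H₀) * A₃
        = (-Complex.I) • (-L₀ + Complex.I • H₀) ∧
    A₃ * (A₃ * (-L₀ + Complex.I • H₀) - (-L₀ + Complex.I • H₀) * A₃)
        - (A₃ * (-L₀ + Complex.I • H₀) - (-L₀ + Complex.I • H₀) * A₃) * A₃
        = -(-L₀ + Complex.I • H₀) := by
  obtain ⟨e1, e2, -⟩ := hcomm 1 (by simp)
  obtain ⟨f1, f2, -⟩ := hcomm (-1) (by simp)
  simp only [inv_one, one_smul, inv_neg, neg_smul] at e1 e2 f1 f2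
  have hL : A₃ * L₀ - L₀ * A₃ = -H₀ := by
    have key : (A₃ * L₀ - L₀ * A₃) + (A₃ * L₀ - L₀ * A₃) = -H₀ + -H₀ := by
      calc (A₃ * L₀ - L₀ * A₃) + (A₃ * L₀ - L₀ * A₃)
          = (A₃ * (L₁ + L₀ + matConj L₁) - (L₁ + L₀ + matConj L₁) * A₃)
            + (A₃ * (-L₁ + L₀ + -matConj L₁) - (-L₁ + L₀ + -matConj L₁) * A₃) := by
              noncomm_ring
        _ = -(H₁ + H₀ + matConj H₁) + -(-H₁ + H₀ + -matConj H₁) := by rw [e1, f1]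
        _ = -H₀ + -H₀ := by abel
    have h2 : (2 : ℂ) • (A₃ * L₀ - L₀ * A₃) = (2 : ℂ) • (-H₀ : Matrix (Fin N) (Fin N) ℂ) := by
      rw [two_smul, two_smul]; exact key
    exact smul_right_injective (Matrix (Fin N) (Fin N) ℂ) (two_ne_zero) h2
  have hH : A₃ * H₀ - H₀ * A₃ = L₀ := by
    have key : (A₃ * H₀ - H₀ * A₃) + (A₃ * H₀ - H₀ * A₃) = L₀ + L₀ := by
      calc (A₃ * H₀ - H₀ * A₃) + (A₃ * H₀ - H₀ * A₃)
          = (A₃ * (H₁ + H₀ + matConj H₁) - (H₁ + H₀ + matConj H₁) * A₃)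
            + (A₃ * (-H₁ + H₀ + -matConj H₁) - (-H₁ + H₀ + -matConj H₁) * A₃) := by
              noncomm_ring
        _ = (L₁ + L₀ + matConj L₁) + (-L₁ + L₀ + -matConj L₁) := by rw [e2, f2]
        _ = L₀ + L₀ := by abel
    have h2 : (2 : ℂ) • (A₃ * H₀ - H₀ * A₃) = (2 : ℂ) • L₀ := by
      rw [two_smul, two_smul]; exact key
    exact smul_right_injective (Matrix (Fin N) (Fin N) ℂ) (two_ne_zero) h2
  have h1 : A₃ * (-L₀ + Complex.I • H₀) - (-L₀ + Complex.I • H₀) * A₃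
      = (-Complex.I) • (-L₀ + Complex.I • H₀) := by
    calc A₃ * (-L₀ + Complex.I • H₀) - (-L₀ + Complex.I • H₀) * A₃
        = -(A₃ * L₀ - L₀ * A₃) + Complex.I • (A₃ * H₀ - H₀ * A₃) := by
          simp only [mul_add, add_mul, mul_neg, neg_mul, mul_smul_comm, smul_mul_assoc,
            smul_sub]
          abel
      _ = -(-H₀) + Complex.I • L₀ := by rw [hL, hH]
      _ = (-Complex.I) • (-L₀ + Complex.I • H₀) := by
          simp only [smul_add, smul_smul, smul_neg, neg_neg, neg_smul, neg_mul,
            Complex.I_mul_I, one_smul]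
          abel
  refine ⟨h1, ?_⟩
  rw [h1]
  have h3 : A₃ * ((-Complex.I) • (-L₀ + Complex.I • H₀))
      - ((-Complex.I) • (-L₀ + Complex.I • H₀)) * A₃
      = (-Complex.I) • (A₃ * (-L₀ + Complex.I • H₀) - (-L₀ + Complex.I • H₀) * A₃) := by
    simp only [mul_smul_comm, smul_mul_assoc, smul_sub]
  rw [h3, h1, smul_smul]
  simp [Complex.I_mul_I]
  abel
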